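/- For every natural number l ≥ 2, at least one of l and l − 2 is a sum of three squares of natural numbers. -/

import Mathlib

set_option maxHeartbeats 1000000

/-- Binary quadratic form value. -/
def Bf (a b c x y : ℤ) : ℤ := a*x^2 + 2*b*x*y + c*y^2

/-- Rounding: we can shift `r` by a multiple of `m > 0` into `[-m/2, m/2]`. -/
lemma round_lemma (r m : ℤ) (hm : 0 < m) : ∃ k : ℤ, 4*(r + k*m)^2 ≤ m^2 := by
  rcases le_or_gt (2*(r % m)) m with h | h
  · refine ⟨-(r / m), ?_⟩
    have h1 : r + -(r/m)*m = r % m := by rw [Int.emod_def]; ring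
    have h2 : 0 ≤ r % m := Int.emod_nonneg r hm.ne'
    rw [h1]; nlinarith
  · refine ⟨-(r / m) - 1, ?_⟩
    have h1 : r + (-(r/m) - 1)*m = r % m - m := by rw [Int.emod_def]; ring
    have h2 : r % m < m := Int.emod_lt_of_pos r hm
    rw [h1]; nlinarith

/-- A positive definite integer binary form attains a positive minimum at a primitive vector. -/
lemma bin_min (a b c : ℤ) (hpos : ∀ x y : ℤ, (x ≠ 0 ∨ y ≠ 0) → 0 < Bf a b c x y) :
    ∃ m x y : ℤ, Bf a b c x y = m ∧ Int.gcd x y = 1 ∧ 0 < m ∧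
      ∀ u v : ℤ, (u ≠ 0 ∨ v ≠ 0) → m ≤ Bf a b c u v := by
  classical
  set S : Set ℕ := {n | ∃ x y : ℤ, (x ≠ 0 ∨ y ≠ 0) ∧ Bf a b c x y = n} with hS
  have hne : S.Nonempty := by
    have h1 : 0 < Bf a b c 1 0 := hpos 1 0 (Or.inl one_ne_zero)
    exact ⟨(Bf a b c 1 0).toNat, 1, 0, Or.inl one_ne_zero, by rw [Int.toNat_of_nonneg h1.le]⟩
  obtain ⟨x, y, hxy, hval⟩ := Nat.sInf_mem hne
  have hmin : ∀ u v : ℤ, (u ≠ 0 ∨ v ≠ 0) → ((sInf S : ℕ) : ℤ) ≤ Bf a b c u v := by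
    intro u v huv
    have h1 : 0 < Bf a b c u v := hpos u v huv
    have h2 : (Bf a b c u v).toNat ∈ S := ⟨u, v, huv, by rw [Int.toNat_of_nonneg h1.le]⟩
    have := Nat.sInf_le h2
    omega
  have hm0 : 0 < ((sInf S : ℕ) : ℤ) := by rw [← hval]; exact hpos x y hxy
  -- primitivity
  set g : ℕ := Int.gcd x y with hg
  have hgne : g ≠ 0 := by
    rcases hxy with h | h
    · exact fun hc => h ((Int.gcd_eq_zero_iff.mp hc).1)
    · exact fun hc => h ((Int.gcd_eq_zero_iff.mp hc).2)
  obtain ⟨x', hx'⟩ : (g:ℤ) ∣ x := Int.gcd_dvd_left x y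
  obtain ⟨y', hy'⟩ : (g:ℤ) ∣ y := Int.gcd_dvd_right x y
  have hxy' : x' ≠ 0 ∨ y' ≠ 0 := by
    rcases hxy with h | h
    · left; rintro rfl; simp at hx'; exact h hx'
    · right; rintro rfl; simp at hy'; exact h hy'
  have hfv : Bf a b c x y = (g:ℤ)^2 * Bf a b c x' y' := by
    rw [hx', hy']; unfold Bf; ring
  have hle := hmin x' y' hxy'
  have hg1 : g = 1 := by
    by_contra hne1
    have hg2 : 2 ≤ (g:ℤ) := by omega
    have hb' : 0 < Bf a b c x' y' := hpos x' y' hxy'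
    have h4 : 4 ≤ (g:ℤ)^2 := by nlinarith
    nlinarith
  have hgcd' : Int.gcd x' y' = 1 := by
    have hx1 : x = x' := by rw [hx', hg1]; push_cast; ring
    have hy1 : y = y' := by rw [hy', hg1]; push_cast; ring
    rw [← hx1, ← hy1]; rw [← hg, hg1]
  refine ⟨((sInf S : ℕ) : ℤ), x', y', ?_, hgcd', hm0, hmin⟩
  have hfv' := hfv
  rw [hval, hg1] at hfv'
  push_cast at hfv'
  linarith

lemma Bf_def (a b c x y : ℤ) : Bf a b c x y = a*x^2 + 2*b*x*y + c*y^2 := rfl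

/-- From a primitive vector, a unimodular completion with transformed coefficients. -/
lemma bin_base (a b c x y : ℤ) (h : Int.gcd x y = 1) :
    ∃ s t : ℤ, x*t - y*s = 1 := by
  have hb := Int.gcd_eq_gcd_ab x y
  rw [h] at hb
  exact ⟨-(Int.gcdB x y), Int.gcdA x y, by push_cast at hb; linarith⟩

/-- Hermite bound for positive definite integer binary forms: 3 m² ≤ 4 Δ. -/
lemma bin_hermite (a b c : ℤ) (hpos : ∀ x y : ℤ, (x ≠ 0 ∨ y ≠ 0) → 0 < Bf a b c x y)
    {m x y : ℤ} (hval : Bf a b c x y = m) (hgcd : Int.gcd x y = 1)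
    (hmin : ∀ u v : ℤ, (u ≠ 0 ∨ v ≠ 0) → m ≤ Bf a b c u v) :
    3*m^2 ≤ 4*(a*c - b^2) := by
  have hxy0 : x ≠ 0 ∨ y ≠ 0 := by
    by_contra h
    push_neg at h
    rw [h.1, h.2] at hgcd
    simp at hgcd
  have hm0 : 0 < m := hval ▸ hpos x y hxy0
  obtain ⟨s, t, hst⟩ := bin_base a b c x y hgcd
  set b' : ℤ := a*x*s + b*(x*t + y*s) + c*y*t with hb'
  set c' : ℤ := Bf a b c s t with hc'
  have hdet : m * c' - b'^2 = (a*c - b^2) * (x*t - y*s)^2 := by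
    rw [← hval, hc', Bf_def, Bf_def, hb']; ring
  rw [hst] at hdet
  obtain ⟨k, hk⟩ := round_lemma b' m hm0
  -- value at new vector (s + k*x, t + k*y)
  have hv : m * Bf a b c (s + k*x) (t + k*y) = (b' + k*m)^2 + (m*c' - b'^2) := by
    rw [← hval, hb', hc', Bf_def, Bf_def, Bf_def]; ring
  have hpos' : (s + k*x) ≠ 0 ∨ (t + k*y) ≠ 0 := by
    by_contra hc0
    push_neg at hc0
    -- then x*(t+ky) - y*(s+kx) = x*t - y*s = 1 would be 0
    have : x*(t + k*y) - y*(s + k*x) = 1 := by rw [← hst]; ring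
    rw [hc0.1, hc0.2] at this; simp at this
  have hge := hmin _ _ hpos'
  have : m * m ≤ (b' + k*m)^2 + (m*c' - b'^2) := by
    calc m * m ≤ m * Bf a b c (s + k*x) (t + k*y) := by
          exact mul_le_mul_of_nonneg_left hge hm0.le
      _ = _ := hv
  rw [hdet] at this
  nlinarith

/-- A positive definite integer binary form of determinant 1 takes only values that are
sums of two squares. -/
lemma bin_det_one (a b c : ℤ) (hpos : ∀ x y : ℤ, (x ≠ 0 ∨ y ≠ 0) → 0 < Bf a b c x y)
    (hdet : a*c - b^2 = 1) (w1 w2 : ℤ) : ∃ r s : ℤ, Bf a b c w1 w2 = r^2 + s^2 := by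
  obtain ⟨m, x, y, hval, hgcd, hm0, hmin⟩ := bin_min a b c hpos
  have hherm := bin_hermite a b c hpos hval hgcd hmin
  rw [hdet] at hherm
  have hm1 : m = 1 := by nlinarith
  obtain ⟨s, t, hst⟩ := bin_base a b c x y hgcd
  set b' : ℤ := a*x*s + b*(x*t + y*s) + c*y*t with hb'
  set c' : ℤ := Bf a b c s t with hc'
  have hdet' : m * c' - b'^2 = (a*c - b^2) * (x*t - y*s)^2 := by
    rw [← hval, hc', Bf_def, Bf_def, hb']; ring
  rw [hdet, hst, hm1] at hdet'
  -- c' = 1 + b'^2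
  -- coordinates of w in the new basis
  set u : ℤ := t*w1 - s*w2 with hu
  set v : ℤ := -y*w1 + x*w2 with hv
  have hw1 : x*u + s*v = w1 := by rw [hu, hv]; linear_combination w1 * hst
  have hw2 : y*u + t*v = w2 := by rw [hu, hv]; linear_combination w2 * hst
  refine ⟨u + b'*v, v, ?_⟩
  have hcov : Bf a b c (x*u + s*v) (y*u + t*v)
      = m*u^2 + 2*b'*u*v + c'*v^2 := by
    rw [← hval, hb', hc', Bf_def, Bf_def, Bf_def]; ring
  rw [hw1, hw2] at hcov
  rw [hcov, hm1]
  linear_combination v^2 * hdet'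

def Tf (a b c d e f x y z : ℤ) : ℤ :=
  a*x^2 + b*y^2 + c*z^2 + 2*d*x*y + 2*e*x*z + 2*f*y*z

def Tdet (a b c d e f : ℤ) : ℤ := a*b*c + 2*d*e*f - a*f^2 - b*e^2 - c*d^2

def det3 (x1 y1 z1 x2 y2 z2 x3 y3 z3 : ℤ) : ℤ :=
  x1*(y2*z3 - z2*y3) - x2*(y1*z3 - z1*y3) + x3*(y1*z2 - z1*y2)

/-- Minimum of a positive definite integer ternary form, attained at a primitive vector. -/
lemma tern_min (a b c d e f : ℤ)
    (hpos : ∀ x y z : ℤ, (x ≠ 0 ∨ y ≠ 0 ∨ z ≠ 0) → 0 < Tf a b c d e f x y z) :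
    ∃ m x y z : ℤ, Tf a b c d e f x y z = m ∧ Int.gcd (Int.gcd x y : ℤ) z = 1 ∧ 0 < m ∧
      ∀ u v w : ℤ, (u ≠ 0 ∨ v ≠ 0 ∨ w ≠ 0) → m ≤ Tf a b c d e f u v w := by
  classical
  set S : Set ℕ := {n | ∃ x y z : ℤ, (x ≠ 0 ∨ y ≠ 0 ∨ z ≠ 0) ∧ Tf a b c d e f x y z = n} with hS
  have hne : S.Nonempty := by
    have h1 : 0 < Tf a b c d e f 1 0 0 := hpos 1 0 0 (Or.inl one_ne_zero)
    exact ⟨(Tf a b c d e f 1 0 0).toNat, 1, 0, 0, Or.inl one_ne_zero,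
      by rw [Int.toNat_of_nonneg h1.le]⟩
  obtain ⟨x, y, z, hxyz, hval⟩ := Nat.sInf_mem hne
  have hmin : ∀ u v w : ℤ, (u ≠ 0 ∨ v ≠ 0 ∨ w ≠ 0) →
      ((sInf S : ℕ) : ℤ) ≤ Tf a b c d e f u v w := by
    intro u v w huv
    have h1 : 0 < Tf a b c d e f u v w := hpos u v w huv
    have h2 : (Tf a b c d e f u v w).toNat ∈ S :=
      ⟨u, v, w, huv, by rw [Int.toNat_of_nonneg h1.le]⟩
    have := Nat.sInf_le h2
    omega
  have hm0 : 0 < ((sInf S : ℕ) : ℤ) := by rw [← hval]; exact hpos x y z hxyz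
  set g : ℕ := Int.gcd (Int.gcd x y : ℤ) z with hg
  have hdx : (g:ℤ) ∣ x := dvd_trans (Int.gcd_dvd_left _ _) (Int.gcd_dvd_left _ _)
  have hdy : (g:ℤ) ∣ y := dvd_trans (Int.gcd_dvd_left _ _) (Int.gcd_dvd_right _ _)
  have hdz : (g:ℤ) ∣ z := Int.gcd_dvd_right _ _
  have hgne : g ≠ 0 := by
    intro hc
    rw [hc] at hdx hdy hdz
    simp only [Nat.cast_zero, zero_dvd_iff] at hdx hdy hdz
    rcases hxyz with h | h | h <;> [exact h hdx; exact h hdy; exact h hdz]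
  obtain ⟨x', hx'⟩ := hdx
  obtain ⟨y', hy'⟩ := hdy
  obtain ⟨z', hz'⟩ := hdz
  have hxyz' : x' ≠ 0 ∨ y' ≠ 0 ∨ z' ≠ 0 := by
    rcases hxyz with h | h | h
    · left; rintro rfl; rw [mul_zero] at hx'; exact h hx'
    · right; left; rintro rfl; rw [mul_zero] at hy'; exact h hy'
    · right; right; rintro rfl; rw [mul_zero] at hz'; exact h hz'
  have hfv : Tf a b c d e f x y z = (g:ℤ)^2 * Tf a b c d e f x' y' z' := by
    rw [hx', hy', hz']; unfold Tf; ring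
  have hle := hmin x' y' z' hxyz'
  have hg1 : g = 1 := by
    by_contra hne1
    have hg2 : 2 ≤ (g:ℤ) := by omega
    have hb' : 0 < Tf a b c d e f x' y' z' := hpos x' y' z' hxyz'
    have h4 : 4 ≤ (g:ℤ)^2 := by nlinarith
    nlinarith
  have hx1 : x = x' := by rw [hx', hg1]; push_cast; ring
  have hy1 : y = y' := by rw [hy', hg1]; push_cast; ring
  have hz1 : z = z' := by rw [hz', hg1]; push_cast; ring
  refine ⟨((sInf S : ℕ) : ℤ), x', y', z', ?_, ?_, hm0, hmin⟩
  · rw [← hx1, ← hy1, ← hz1]; exact hval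
  · rw [← hx1, ← hy1, ← hz1, ← hg, hg1]

/-- Every primitive integer vector is the first column of a matrix of determinant 1. -/
lemma tern_basis (x y z : ℤ) (h : Int.gcd (Int.gcd x y : ℤ) z = 1) :
    ∃ x2 y2 z2 x3 y3 z3 : ℤ, det3 x y z x2 y2 z2 x3 y3 z3 = 1 := by
  by_cases hxy : Int.gcd x y = 0
  · -- x = y = 0, z = ±1
    have hx0 : x = 0 := (Int.gcd_eq_zero_iff.mp hxy).1
    have hy0 : y = 0 := (Int.gcd_eq_zero_iff.mp hxy).2
    rw [hxy] at h
    simp only [Nat.cast_zero] at h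
    have hz : z = 1 ∨ z = -1 := by
      have := Int.isCoprime_iff_gcd_eq_one.mpr h
      rcases Int.isCoprime_iff_gcd_eq_one.mp this with _
      have : z.natAbs = 1 := by
        simpa [Int.gcd] using h
      omega
    subst hx0; subst hy0
    rcases hz with rfl | rfl
    · exact ⟨1, 0, 0, 0, 1, 0, by unfold det3; ring⟩
    · exact ⟨0, 1, 0, 1, 0, 0, by unfold det3; ring⟩
  · set G : ℕ := Int.gcd x y with hG
    have hGz : (G:ℤ) ≠ 0 := by exact_mod_cast hxy
    -- Bezout for x, y
    have hab := Int.gcd_eq_gcd_ab x y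
    set α : ℤ := Int.gcdA x y with hα
    set β : ℤ := Int.gcdB x y with hβ
    have hαβ : x*α + y*β = (G:ℤ) := by rw [hG]; push_cast [hab]; ring
    -- Bezout for G, z
    have hab2 := Int.gcd_eq_gcd_ab (G:ℤ) z
    rw [h] at hab2
    set s : ℤ := Int.gcdA (G:ℤ) z with hs
    set t : ℤ := Int.gcdB (G:ℤ) z with ht
    have hst : (G:ℤ)*s + z*t = 1 := by push_cast at hab2; linarith
    obtain ⟨u1, hu1⟩ : (G:ℤ) ∣ x := Int.gcd_dvd_left x y
    obtain ⟨u2, hu2⟩ : (G:ℤ) ∣ y := Int.gcd_dvd_right x y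
    have h1 : α*u1 + β*u2 = 1 := by
      have : (G:ℤ) * (α*u1 + β*u2) = (G:ℤ) * 1 := by
        rw [hu1, hu2] at hαβ; linear_combination hαβ
      exact mul_left_cancel₀ hGz this
    refine ⟨-β, α, 0, -t*u1, -t*u2, s, ?_⟩
    unfold det3
    rw [hu1, hu2]
    linear_combination ((G:ℤ)*s + z*t) * h1 + hst

def Pol (a b c d e f x1 y1 z1 x2 y2 z2 : ℤ) : ℤ :=
  a*x1*x2 + b*y1*y2 + c*z1*z2 + d*(x1*y2 + x2*y1) + e*(x1*z2 + x2*z1) + f*(y1*z2 + y2*z1)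

lemma tern_cov (a b c d e f x1 y1 z1 x2 y2 z2 x3 y3 z3 u v w : ℤ) :
    Tf a b c d e f (x1*u + x2*v + x3*w) (y1*u + y2*v + y3*w) (z1*u + z2*v + z3*w)
      = Tf (Tf a b c d e f x1 y1 z1) (Tf a b c d e f x2 y2 z2) (Tf a b c d e f x3 y3 z3)
          (Pol a b c d e f x1 y1 z1 x2 y2 z2) (Pol a b c d e f x1 y1 z1 x3 y3 z3)
          (Pol a b c d e f x2 y2 z2 x3 y3 z3) u v w := by
  unfold Tf Pol; ring

lemma tern_det_cov (a b c d e f x1 y1 z1 x2 y2 z2 x3 y3 z3 : ℤ) :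
    Tdet (Tf a b c d e f x1 y1 z1) (Tf a b c d e f x2 y2 z2) (Tf a b c d e f x3 y3 z3)
          (Pol a b c d e f x1 y1 z1 x2 y2 z2) (Pol a b c d e f x1 y1 z1 x3 y3 z3)
          (Pol a b c d e f x2 y2 z2 x3 y3 z3)
      = Tdet a b c d e f * (det3 x1 y1 z1 x2 y2 z2 x3 y3 z3)^2 := by
  unfold Tdet Tf Pol det3; ring

/-- If the new coordinates of a vector vanish and det = 1, the vector vanishes. -/
lemma cramer_ne (x1 y1 z1 x2 y2 z2 x3 y3 z3 u v w : ℤ)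
    (hdt : det3 x1 y1 z1 x2 y2 z2 x3 y3 z3 = 1) (h : u ≠ 0 ∨ v ≠ 0 ∨ w ≠ 0) :
    (x1*u + x2*v + x3*w) ≠ 0 ∨ (y1*u + y2*v + y3*w) ≠ 0 ∨ (z1*u + z2*v + z3*w) ≠ 0 := by
  by_contra hc
  push_neg at hc
  obtain ⟨hX, hY, hZ⟩ := hc
  have hu : u = 0 := by
    have : u = (x1*u + x2*v + x3*w)*(y2*z3 - z2*y3) - (y1*u + y2*v + y3*w)*(x2*z3 - z2*x3)
        + (z1*u + z2*v + z3*w)*(x2*y3 - y2*x3) := by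
      unfold det3 at hdt; linear_combination (-u) * hdt
    rw [hX, hY, hZ] at this; simpa using this
  have hv : v = 0 := by
    have : v = -((x1*u + x2*v + x3*w)*(y1*z3 - z1*y3)) + (y1*u + y2*v + y3*w)*(x1*z3 - z1*x3)
        - (z1*u + z2*v + z3*w)*(x1*y3 - y1*x3) := by
      unfold det3 at hdt; linear_combination (-v) * hdt
    rw [hX, hY, hZ] at this; simpa using this
  have hw : w = 0 := by
    have : w = (x1*u + x2*v + x3*w)*(y1*z2 - z1*y2) - (y1*u + y2*v + y3*w)*(x1*z2 - z1*x2)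
        + (z1*u + z2*v + z3*w)*(x1*y2 - y1*x2) := by
      unfold det3 at hdt; linear_combination (-w) * hdt
    rw [hX, hY, hZ] at this; simpa using this
  rcases h with h | h | h <;> [exact h hu; exact h hv; exact h hw]

/-- A positive definite integer ternary form of determinant 1 attains the value 1. -/
lemma tern_min_one (a b c d e f : ℤ)
    (hpos : ∀ x y z : ℤ, (x ≠ 0 ∨ y ≠ 0 ∨ z ≠ 0) → 0 < Tf a b c d e f x y z)
    (hdet : Tdet a b c d e f = 1) :
    ∃ x y z : ℤ, Tf a b c d e f x y z = 1 := by
  obtain ⟨m, x1, y1, z1, hval, hprim, hm0, hmin⟩ := tern_min a b c d e f hpos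
  obtain ⟨x2, y2, z2, x3, y3, z3, hdt⟩ := tern_basis x1 y1 z1 hprim
  set B := Tf a b c d e f x2 y2 z2 with hB
  set C := Tf a b c d e f x3 y3 z3 with hC
  set D := Pol a b c d e f x1 y1 z1 x2 y2 z2 with hD
  set E := Pol a b c d e f x1 y1 z1 x3 y3 z3 with hE
  set F := Pol a b c d e f x2 y2 z2 x3 y3 z3 with hF
  have hdet' : Tdet m B C D E F = 1 := by
    rw [← hval, hB, hC, hD, hE, hF, tern_det_cov, hdet, hdt]; ring
  -- new form has the same values on nonzero vectors
  have hval' : ∀ u v w : ℤ, (u ≠ 0 ∨ v ≠ 0 ∨ w ≠ 0) → m ≤ Tf m B C D E F u v w := by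
    intro u v w h
    have := tern_cov a b c d e f x1 y1 z1 x2 y2 z2 x3 y3 z3 u v w
    rw [hval] at this
    rw [← this]
    exact hmin _ _ _ (cramer_ne _ _ _ _ _ _ _ _ _ _ _ _ hdt h)
  -- binary form G from completing the square
  set gA := m*B - D^2 with hgA
  set gB := m*F - D*E with hgB
  set gC := m*C - E^2 with hgC
  have hcomp : ∀ x y z : ℤ, m * Tf m B C D E F x y z = (m*x + D*y + E*z)^2 + Bf gA gB gC y z := by
    intro x y z; unfold Tf Bf; rw [hgA, hgB, hgC]; ring
  have hgdet : gA*gC - gB^2 = m * Tdet m B C D E F := by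
    rw [hgA, hgB, hgC]; unfold Tdet; ring
  rw [hdet', mul_one] at hgdet
  have hGpos : ∀ y z : ℤ, (y ≠ 0 ∨ z ≠ 0) → 0 < Bf gA gB gC y z := by
    intro y z h
    obtain ⟨k, hk⟩ := round_lemma (D*y + E*z) m hm0
    have h1 := hval' k y z (Or.inr h)
    have h2 := hcomp k y z
    nlinarith
  obtain ⟨μ, p, q, hv2, hg2, hμ0, hmin2⟩ := bin_min gA gB gC hGpos
  have hherm := bin_hermite gA gB gC hGpos hv2 hg2 hmin2
  rw [hgdet] at hherm
  -- lower bound on μ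
  have hpq : p ≠ 0 ∨ q ≠ 0 := by
    by_contra hcc; push_neg at hcc; rw [hcc.1, hcc.2] at hg2; simp at hg2
  obtain ⟨k, hk⟩ := round_lemma (D*p + E*q) m hm0
  have h1 := hval' k p q (Or.inr hpq)
  have h2 := hcomp k p q
  rw [hv2] at h2
  have hμge : 3*m^2 ≤ 4*μ := by nlinarith
  have hm1 : m = 1 := by nlinarith
  exact ⟨x1, y1, z1, by rw [hval, hm1]⟩

/-- Values of a positive definite integer ternary form of determinant 1
are sums of three squares. -/
lemma tern_repr (a b c d e f : ℤ)
    (hpos : ∀ x y z : ℤ, (x ≠ 0 ∨ y ≠ 0 ∨ z ≠ 0) → 0 < Tf a b c d e f x y z)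
    (hdet : Tdet a b c d e f = 1) (w1 w2 w3 : ℤ) :
    ∃ r s t : ℤ, Tf a b c d e f w1 w2 w3 = r^2 + s^2 + t^2 := by
  obtain ⟨x1, y1, z1, hval⟩ := tern_min_one a b c d e f hpos hdet
  -- the vector attaining 1 is primitive
  have hprim : Int.gcd (Int.gcd x1 y1 : ℤ) z1 = 1 := by
    set g : ℕ := Int.gcd (Int.gcd x1 y1 : ℤ) z1 with hg
    have hdx : (g:ℤ) ∣ x1 := dvd_trans (Int.gcd_dvd_left _ _) (Int.gcd_dvd_left _ _)
    have hdy : (g:ℤ) ∣ y1 := dvd_trans (Int.gcd_dvd_left _ _) (Int.gcd_dvd_right _ _)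
    have hdz : (g:ℤ) ∣ z1 := Int.gcd_dvd_right _ _
    obtain ⟨x', hx'⟩ := hdx
    obtain ⟨y', hy'⟩ := hdy
    obtain ⟨z', hz'⟩ := hdz
    have hnz : x1 ≠ 0 ∨ y1 ≠ 0 ∨ z1 ≠ 0 := by
      by_contra hcc; push_neg at hcc
      obtain ⟨h1, h2, h3⟩ := hcc
      rw [h1, h2, h3] at hval
      simp [Tf] at hval
    have hgne : g ≠ 0 := by
      intro hc
      rw [hc] at hx' hy' hz'
      push_cast at hx' hy' hz'
      simp at hx' hy' hz'
      rcases hnz with h | h | h <;> [exact h hx'; exact h hy'; exact h hz']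
    have hxyz' : x' ≠ 0 ∨ y' ≠ 0 ∨ z' ≠ 0 := by
      rcases hnz with h | h | h
      · left; rintro rfl; rw [mul_zero] at hx'; exact h hx'
      · right; left; rintro rfl; rw [mul_zero] at hy'; exact h hy'
      · right; right; rintro rfl; rw [mul_zero] at hz'; exact h hz'
    have hfv : (1:ℤ) = (g:ℤ)^2 * Tf a b c d e f x' y' z' := by
      rw [← hval, hx', hy', hz']; unfold Tf; ring
    have := hpos x' y' z' hxyz'
    by_contra hne1
    have hg2 : 2 ≤ (g:ℤ) := by omega
    nlinarith
  obtain ⟨x2, y2, z2, x3, y3, z3, hdt⟩ := tern_basis x1 y1 z1 hprim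
  set B := Tf a b c d e f x2 y2 z2 with hB
  set C := Tf a b c d e f x3 y3 z3 with hC
  set D := Pol a b c d e f x1 y1 z1 x2 y2 z2 with hD
  set E := Pol a b c d e f x1 y1 z1 x3 y3 z3 with hE
  set F := Pol a b c d e f x2 y2 z2 x3 y3 z3 with hF
  have hdet' : Tdet 1 B C D E F = 1 := by
    have := tern_det_cov a b c d e f x1 y1 z1 x2 y2 z2 x3 y3 z3
    rw [hval, hdet, hdt] at this
    rw [← hB, ← hC, ← hD, ← hE, ← hF] at this
    rw [this]; ring
  -- completed-square binary form
  set gA := B - D^2 with hgA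
  set gB := F - D*E with hgB
  set gC := C - E^2 with hgC
  have hcomp : ∀ x y z : ℤ, Tf 1 B C D E F x y z = (x + D*y + E*z)^2 + Bf gA gB gC y z := by
    intro x y z; unfold Tf Bf; rw [hgA, hgB, hgC]; ring
  have hgdet : gA*gC - gB^2 = Tdet 1 B C D E F := by
    rw [hgA, hgB, hgC]; unfold Tdet; ring
  rw [hdet'] at hgdet
  have hval' : ∀ u v w : ℤ, (u ≠ 0 ∨ v ≠ 0 ∨ w ≠ 0) → 0 < Tf 1 B C D E F u v w := by
    intro u v w h
    have hc := tern_cov a b c d e f x1 y1 z1 x2 y2 z2 x3 y3 z3 u v w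
    rw [hval] at hc
    rw [← hB, ← hC, ← hD, ← hE, ← hF] at hc
    rw [← hc]
    exact hpos _ _ _ (cramer_ne _ _ _ _ _ _ _ _ _ _ _ _ hdt h)
  have hGpos : ∀ y z : ℤ, (y ≠ 0 ∨ z ≠ 0) → 0 < Bf gA gB gC y z := by
    intro y z h
    have h1 := hval' (-(D*y + E*z)) y z (Or.inr h)
    have h2 := hcomp (-(D*y + E*z)) y z
    nlinarith
  -- coordinates of (w1,w2,w3) in the new basis
  set u1 := det3 w1 w2 w3 x2 y2 z2 x3 y3 z3 with hu1
  set u2 := det3 x1 y1 z1 w1 w2 w3 x3 y3 z3 with hu2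
  set u3 := det3 x1 y1 z1 x2 y2 z2 w1 w2 w3 with hu3
  have he1 : x1*u1 + x2*u2 + x3*u3 = w1 := by
    rw [hu1, hu2, hu3]; unfold det3 at hdt ⊢; linear_combination w1 * hdt
  have he2 : y1*u1 + y2*u2 + y3*u3 = w2 := by
    rw [hu1, hu2, hu3]; unfold det3 at hdt ⊢; linear_combination w2 * hdt
  have he3 : z1*u1 + z2*u2 + z3*u3 = w3 := by
    rw [hu1, hu2, hu3]; unfold det3 at hdt ⊢; linear_combination w3 * hdt
  obtain ⟨r, s, hrs⟩ := bin_det_one gA gB gC hGpos hgdet u2 u3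
  refine ⟨u1 + D*u2 + E*u3, r, s, ?_⟩
  have hc := tern_cov a b c d e f x1 y1 z1 x2 y2 z2 x3 y3 z3 u1 u2 u3
  rw [hval] at hc
  rw [← hB, ← hC, ← hD, ← hE, ← hF] at hc
  rw [he1, he2, he3] at hc
  rw [hc, hcomp, hrs]; ring

open ZMod in
/-- Existence of the auxiliary prime. -/
lemma aux_prime (n : ℕ) (hn : 2 ≤ n) (h14 : n % 4 = 1 ∨ n % 4 = 2) :
    ∃ q D : ℕ, Nat.Prime q ∧ Odd q ∧ 0 < D ∧ n * D = q + 1 ∧ jacobiSym (-(D:ℤ)) q = 1 := by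
  haveI : NeZero (4*n) := ⟨by omega⟩
  haveI : NeZero (8*n) := ⟨by omega⟩
  rcases h14 with h4 | h4
  · -- n ≡ 1 mod 4 : take q ≡ 2n-1 mod 8n
    have hcop : Nat.Coprime (2*n - 1) (8*n) := by
      have h1 : Nat.Coprime (2*n - 1) n := by
        have hd := Nat.gcd_dvd_left (2*n-1) n
        have hd2 := Nat.gcd_dvd_right (2*n-1) n
        have h3 : Nat.gcd (2*n-1) n ∣ 2*n := Dvd.dvd.mul_left hd2 2
        have h4 := Nat.dvd_sub h3 hd
        rw [show 2*n - (2*n-1) = 1 by omega] at h4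
        exact Nat.eq_one_of_dvd_one h4
      have h2 : Nat.Coprime (2*n - 1) 8 := by
        have : Nat.Coprime (2*n-1) 2 :=
          Nat.coprime_two_right.mpr (Nat.odd_iff.mpr (by omega))
        simpa using this.pow_right 3
      exact Nat.Coprime.mul_right h2 h1
    have hunit : IsUnit ((2*n - 1 : ℕ) : ZMod (8*n)) :=
      (ZMod.isUnit_iff_coprime _ _).mpr hcop
    obtain ⟨q, hq_gt, hq_prime, hq_mod⟩ := Nat.forall_exists_prime_gt_and_eq_mod hunit (8*n)
    have hmodeq : q ≡ (2*n - 1) [MOD 8*n] := (ZMod.natCast_eq_natCast_iff _ _ _).mp hq_mod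
    have hqmod : q % (8*n) = 2*n - 1 := by
      unfold Nat.ModEq at hmodeq
      rwa [Nat.mod_eq_of_lt (by omega : 2*n-1 < 8*n)] at hmodeq
    set k := q / (8*n) with hk
    have hdm := Nat.div_add_mod q (8*n)
    rw [← hk] at hdm
    have e0 : q = 8*(n*k) + (2*n - 1) := by
      have : 8*n*k = 8*(n*k) := by ring
      omega
    have hnD : n * (8*k + 2) = q + 1 := by
      have : n*(8*k+2) = 8*(n*k) + 2*n := by ring
      omega
    refine ⟨q, 8*k + 2, hq_prime, Nat.odd_iff.mpr (by omega), by omega, hnD, ?_⟩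
    have hq8 : q % 8 = 1 := by omega
    have hq4 : q % 4 = 1 := by omega
    have hoddq : Odd q := Nat.odd_iff.mpr (by omega)
    have hE4 : (4*k + 1) % 4 = 1 := by omega
    have hsplit : (-((8*k+2 : ℕ) : ℤ)) = (-1) * 2 * ((4*k+1 : ℕ) : ℤ) := by push_cast; ring
    rw [hsplit, jacobiSym.mul_left, jacobiSym.mul_left]
    have e1 : jacobiSym (-1) q = 1 := by
      rw [jacobiSym.at_neg_one hoddq, χ₄_nat_one_mod_four hq4]
    have e2 : jacobiSym 2 q = 1 := by
      have hq2 : q % 2 = 1 := by omega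
      rw [jacobiSym.at_two hoddq, χ₈_nat_eq_if_mod_eight, hq8, hq2]
      norm_num
    have e3 : jacobiSym ((4*k+1 : ℕ) : ℤ) q = 1 := by
      rw [jacobiSym.quadratic_reciprocity_one_mod_four hE4 hoddq]
      have hdvd : ((4*k+1 : ℕ) : ℤ) ∣ ((-1) - (q:ℤ)) := by
        refine ⟨-(2*(n:ℤ)), ?_⟩
        have hc' : ((4*k+1 : ℕ) : ℤ) * (2*(n:ℤ)) = (q:ℤ) + 1 := by
          have : n * ((4*k+1) * 2) = q + 1 := by rw [← hnD]; ring
          exact_mod_cast by push_cast [← this]; ring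
        linarith
      have hmod : (q:ℤ) ≡ -1 [ZMOD ((4*k+1 : ℕ) : ℤ)] := Int.modEq_iff_dvd.mpr hdvd
      rw [jacobiSym.mod_left' hmod, jacobiSym.at_neg_one (Nat.odd_iff.mpr (by omega)),
        χ₄_nat_one_mod_four hE4]
    rw [e1, e2, e3]; ring
  · -- n ≡ 2 mod 4 : take q ≡ n-1 mod 4n
    have hcop : Nat.Coprime (n - 1) (4*n) := by
      have h1 : Nat.Coprime (n - 1) n := by
        have hd := Nat.gcd_dvd_left (n-1) n
        have hd2 := Nat.gcd_dvd_right (n-1) n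
        have h4 := Nat.dvd_sub hd2 hd
        rw [show n - (n-1) = 1 by omega] at h4
        exact Nat.eq_one_of_dvd_one h4
      have h2 : Nat.Coprime (n - 1) 4 := by
        have : Nat.Coprime (n-1) 2 :=
          Nat.coprime_two_right.mpr (Nat.odd_iff.mpr (by omega))
        simpa using this.pow_right 2
      exact Nat.Coprime.mul_right h2 h1
    have hunit : IsUnit ((n - 1 : ℕ) : ZMod (4*n)) :=
      (ZMod.isUnit_iff_coprime _ _).mpr hcop
    obtain ⟨q, hq_gt, hq_prime, hq_mod⟩ := Nat.forall_exists_prime_gt_and_eq_mod hunit (4*n)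
    have hmodeq : q ≡ (n - 1) [MOD 4*n] := (ZMod.natCast_eq_natCast_iff _ _ _).mp hq_mod
    have hqmod : q % (4*n) = n - 1 := by
      unfold Nat.ModEq at hmodeq
      rwa [Nat.mod_eq_of_lt (by omega : n-1 < 4*n)] at hmodeq
    set k := q / (4*n) with hk
    have hdm := Nat.div_add_mod q (4*n)
    rw [← hk] at hdm
    have e0 : q = 4*(n*k) + (n - 1) := by
      have : 4*n*k = 4*(n*k) := by ring
      omega
    have hnD : n * (4*k + 1) = q + 1 := by
      have : n*(4*k+1) = 4*(n*k) + n := by ring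
      omega
    refine ⟨q, 4*k + 1, hq_prime, Nat.odd_iff.mpr (by omega), by omega, hnD, ?_⟩
    have hq4 : q % 4 = 1 := by omega
    have hoddq : Odd q := Nat.odd_iff.mpr (by omega)
    have hD4 : (4*k + 1) % 4 = 1 := by omega
    have hsplit : (-((4*k+1 : ℕ) : ℤ)) = (-1) * ((4*k+1 : ℕ) : ℤ) := by push_cast; ring
    rw [hsplit, jacobiSym.mul_left]
    have e1 : jacobiSym (-1) q = 1 := by
      rw [jacobiSym.at_neg_one hoddq, χ₄_nat_one_mod_four hq4]
    have e3 : jacobiSym ((4*k+1 : ℕ) : ℤ) q = 1 := by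
      rw [jacobiSym.quadratic_reciprocity_one_mod_four hD4 hoddq]
      have hdvd : ((4*k+1 : ℕ) : ℤ) ∣ ((-1) - (q:ℤ)) := by
        refine ⟨-(n:ℤ), ?_⟩
        have hc' : ((4*k+1 : ℕ) : ℤ) * ((n:ℤ)) = (q:ℤ) + 1 := by
          have : n * ((4*k+1) * 1) = q + 1 := by rw [← hnD]; ring
          exact_mod_cast by push_cast [← this]; ring
        linarith
      have hmod : (q:ℤ) ≡ -1 [ZMOD ((4*k+1 : ℕ) : ℤ)] := Int.modEq_iff_dvd.mpr hdvd
      rw [jacobiSym.mod_left' hmod, jacobiSym.at_neg_one (Nat.odd_iff.mpr (by omega)),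
        χ₄_nat_one_mod_four hD4]
    rw [e1, e3]; ring

/-- Every `n ≡ 1, 2 (mod 4)` with `n ≥ 2` is a sum of three squares. -/
lemma three_squares_aux (n : ℕ) (hn : 2 ≤ n) (h14 : n % 4 = 1 ∨ n % 4 = 2) :
    ∃ x y z : ℕ, n = x^2 + y^2 + z^2 := by
  obtain ⟨q, D, hq, hodd, hD0, hnD, hjac⟩ := aux_prime n hn h14
  haveI := Fact.mk hq
  have hq2 : 2 ≤ q := hq.two_le
  have hnDz : (n:ℤ) * (D:ℤ) = (q:ℤ) + 1 := by exact_mod_cast hnD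
  -- -D is a nonzero square mod q
  have hne : (((-(D:ℤ)) : ℤ) : ZMod q) ≠ 0 := by
    rw [Ne, ZMod.intCast_zmod_eq_zero_iff_dvd]
    intro hdvd
    have h1 : (q:ℤ) ∣ (D:ℤ) := (dvd_neg).mp hdvd
    have h2 : q ∣ D := Int.natCast_dvd_natCast.mp h1
    have h3 : q ∣ q + 1 := hnD ▸ Dvd.dvd.mul_left h2 n
    have h4 : q ∣ 1 := (Nat.dvd_add_right (dvd_refl q)).mp h3
    have := Nat.eq_one_of_dvd_one h4
    omega
  have hleg : legendreSym q (-(D:ℤ)) = 1 := by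
    rw [jacobiSym.legendreSym.to_jacobiSym]; exact hjac
  have hsq : IsSquare ((-(D:ℤ) : ℤ) : ZMod q) := (legendreSym.eq_one_iff q hne).mp hleg
  obtain ⟨s0, hs0⟩ := hsq
  set β : ℤ := (s0.val : ℤ) with hβdef
  have hβcast : ((β : ℤ) : ZMod q) = s0 := by
    rw [hβdef]
    push_cast
    exact ZMod.natCast_rightInverse s0
  have hβ : ((β^2 + (D:ℤ) : ℤ) : ZMod q) = 0 := by
    push_cast
    rw [show ((β : ℤ) : ZMod q) = s0 from hβcast]
    have : ((-(D:ℤ) : ℤ) : ZMod q) = s0 * s0 := hs0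
    push_cast at this
    linear_combination -this
  have hdvd : (q:ℤ) ∣ β^2 + (D:ℤ) := (ZMod.intCast_zmod_eq_zero_iff_dvd _ q).mp hβ
  obtain ⟨c, hc⟩ := hdvd
  -- c ≥ 1
  have hc1 : 1 ≤ c := by nlinarith [sq_nonneg β, hD0, hq2, hc]
  have hcq : c*(q:ℤ) - β^2 = (D:ℤ) := by linarith [hc]
  -- the determinant-one ternary form
  have hdet : Tdet c (q:ℤ) (n:ℤ) (-β) 1 0 = 1 := by
    unfold Tdet
    linear_combination ((n:ℤ)) * hcq + hnDz
  have key1 : (c*(n:ℤ) - 1) * ((q:ℤ)*(n:ℤ)) - (β*(n:ℤ))^2 = (n:ℤ) := by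
    linear_combination ((n:ℤ)^2) * hcq + ((n:ℤ)) * hnDz
  have hn2 : (2:ℤ) ≤ (n:ℤ) := by exact_mod_cast hn
  have hcn : 1 ≤ c*(n:ℤ) - 1 := by nlinarith
  have hpos : ∀ x y z : ℤ, (x ≠ 0 ∨ y ≠ 0 ∨ z ≠ 0) →
      0 < Tf c (q:ℤ) (n:ℤ) (-β) 1 0 x y z := by
    intro x y z hxyz
    have hid1 : (n:ℤ) * Tf c (q:ℤ) (n:ℤ) (-β) 1 0 x y z
        = ((n:ℤ)*z + x)^2 + ((c*(n:ℤ)-1)*x^2 - 2*β*(n:ℤ)*x*y + (q:ℤ)*(n:ℤ)*y^2) := by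
      unfold Tf; ring
    have hid2 : (c*(n:ℤ)-1) * ((c*(n:ℤ)-1)*x^2 - 2*β*(n:ℤ)*x*y + (q:ℤ)*(n:ℤ)*y^2)
        = ((c*(n:ℤ)-1)*x - β*(n:ℤ)*y)^2 + (n:ℤ)*y^2 := by
      linear_combination y^2 * key1
    have hn0 : (0:ℤ) < (n:ℤ) := by linarith
    rcases eq_or_ne y 0 with rfl | hy
    · rcases eq_or_ne x 0 with rfl | hx
      · -- x = y = 0, z ≠ 0
        have hz : z ≠ 0 := by tauto
        have hzz : Tf c (q:ℤ) (n:ℤ) (-β) 1 0 0 0 z = (n:ℤ)*z^2 := by unfold Tf; ring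
        rw [hzz]
        positivity
      · have hH : (0:ℤ) < (c*(n:ℤ)-1)*x^2 - 2*β*(n:ℤ)*x*0 + (q:ℤ)*(n:ℤ)*0^2 := by
          have hx2 : 0 < x^2 := by positivity
          nlinarith
        nlinarith [sq_nonneg ((n:ℤ)*z + x), hid1, hH, hn0]
    · have hH : (0:ℤ) < (c*(n:ℤ)-1)*x^2 - 2*β*(n:ℤ)*x*y + (q:ℤ)*(n:ℤ)*y^2 := by
        have hy2 : 0 < y^2 := by positivity
        nlinarith [hid2, sq_nonneg ((c*(n:ℤ)-1)*x - β*(n:ℤ)*y), hcn, hn0]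
      nlinarith [sq_nonneg ((n:ℤ)*z + x), hid1, hH, hn0]
  obtain ⟨r, s, t, hrst⟩ := tern_repr c (q:ℤ) (n:ℤ) (-β) 1 0 hpos hdet 0 0 1
  have hval : Tf c (q:ℤ) (n:ℤ) (-β) 1 0 0 0 1 = (n:ℤ) := by unfold Tf; ring
  rw [hval] at hrst
  have habs : ∀ a : ℤ, ((a.natAbs : ℤ))^2 = a^2 := by
    intro a
    rw [sq, sq]
    exact_mod_cast Int.natAbs_mul_self (a := a)
  refine ⟨r.natAbs, s.natAbs, t.natAbs, ?_⟩
  have : (n:ℤ) = ((r.natAbs : ℤ))^2 + ((s.natAbs : ℤ))^2 + ((t.natAbs : ℤ))^2 := by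
    rw [habs, habs, habs]; exact hrst
  exact_mod_cast this

theorem stmt11 (l : ℕ) (hl : 2 ≤ l) :
    (∃ x y z : ℕ, l = x ^ 2 + y ^ 2 + z ^ 2) ∨
    (∃ x y z : ℕ, l - 2 = x ^ 2 + y ^ 2 + z ^ 2) := by
  rcases (show l % 4 = 0 ∨ l % 4 = 1 ∨ l % 4 = 2 ∨ l % 4 = 3 by omega) with h|h|h|h
  · right
    obtain ⟨x, y, z, hx⟩ := three_squares_aux (l-2) (by omega) (by omega)
    exact ⟨x, y, z, hx⟩
  · left
    obtain ⟨x, y, z, hx⟩ := three_squares_aux l (by omega) (by omega)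
    exact ⟨x, y, z, hx⟩
  · left
    obtain ⟨x, y, z, hx⟩ := three_squares_aux l (by omega) (by omega)
    exact ⟨x, y, z, hx⟩
  · rcases eq_or_ne l 3 with rfl | h3
    · exact Or.inr ⟨1, 0, 0, by norm_num⟩
    · right
      obtain ⟨x, y, z, hx⟩ := three_squares_aux (l-2) (by omega) (by omega)
      exact ⟨x, y, z, hx⟩
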